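/- arXiv:1011.2769 — 2 statements merged into one kernel-verified Lean document; each statement's English description precedes it below -/
import Mathlib

section
/- Let U be a subgroup of the unit circle {z ∈ ℂ : |z| = 1} with −1 ∈ U and with at least 6 elements. Then R(U) equals the set of all finite integer linear combinations of elements of M(U), i.e., R(U) is the additive subgroup of ℂ generated by the monomials M(U). -/
/-- The antisymmetric bracket `⟨x,y⟩ = x·conj(y) − conj(x)·y`. -/
noncomputable def sbr (x y : ℂ) : ℂ :=
  x * (starRingEnd ℂ) y - (starRingEnd ℂ) x * y

/-- The intersection point `I_{u,v}(p,q)` of the lines `L_u(p)` and `L_v(q)`. -/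
noncomputable def Iop (u v p q : ℂ) : ℂ :=
  (sbr u p / sbr u v) * v + (sbr v q / sbr v u) * u

/-- `origamiPts U` is the smallest subset of `ℂ` containing `0` and `1` that is
closed under `(p,q) ↦ I_{u,v}(p,q)` for all `u, v ∈ U` with `u ≠ ±v`.  This is `R(U)`. -/
inductive origamiPts (U : Set ℂ) : ℂ → Prop
  | zero : origamiPts U 0
  | one : origamiPts U 1
  | inter {u v : ℂ} (hu : u ∈ U) (hv : v ∈ U) (huv : u ≠ v) (huv' : u ≠ -v)
      {p q : ℂ} (hp : origamiPts U p) (hq : origamiPts U q) :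
      origamiPts U (Iop u v p q)

/-- `origamiMon U` is the smallest subset of `ℂ` containing `1` that is closed under
`p ↦ I_{u,v}(p,0)` for all `u, v ∈ U` with `u ≠ ±v`.  Its elements are the monomials `M(U)`. -/
inductive origamiMon (U : Set ℂ) : ℂ → Prop
  | one : origamiMon U 1
  | step {u v : ℂ} (hu : u ∈ U) (hv : v ∈ U) (huv : u ≠ v) (huv' : u ≠ -v)
      {p : ℂ} (hp : origamiMon U p) : origamiMon U (Iop u v p 0)

lemma sbr_anti (x y : ℂ) : sbr y x = -sbr x y := by simp [sbr]; ring

lemma sbr_zero_right (x : ℂ) : sbr x 0 = 0 := by simp [sbr]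

lemma sbr_add_right (a x y : ℂ) : sbr a (x + y) = sbr a x + sbr a y := by
  simp [sbr]; ring

lemma sbr_neg_right (a x : ℂ) : sbr a (-x) = -sbr a x := by simp [sbr]; ring

lemma conj_sbr (x y : ℂ) : (starRingEnd ℂ) (sbr x y) = -sbr x y := by
  simp only [sbr, map_sub, map_mul, Complex.conj_conj]; ring

lemma conj_sbr_div (u p v : ℂ) :
    (starRingEnd ℂ) (sbr u p / sbr u v) = sbr u p / sbr u v := by
  rw [map_div₀, conj_sbr, conj_sbr, neg_div_neg_eq]

lemma sbr_real_smul (a x t : ℂ) (ht : (starRingEnd ℂ) t = t) :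
    sbr a (t * x) = t * sbr a x := by
  simp only [sbr, map_mul, ht]; ring

lemma sbr_decomp {u v : ℂ} (huv : sbr u v ≠ 0) (x : ℂ) :
    (sbr u x / sbr u v) * v + (sbr v x / sbr v u) * u = x := by
  have key : sbr u x * v - sbr v x * u = sbr u v * x := by simp [sbr]; ring
  rw [sbr_anti u v, div_neg, neg_mul, ← sub_eq_add_neg, div_mul_eq_mul_div,
    div_mul_eq_mul_div, div_sub_div_same, key, mul_div_cancel_left₀ _ huv]

lemma Iop_zero (u v p : ℂ) : Iop u v p 0 = (sbr u p / sbr u v) * v := by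
  simp [Iop, sbr_zero_right]

lemma Iop_split (u v p q : ℂ) : Iop u v p q = Iop u v p 0 + Iop v u q 0 := by
  simp [Iop, Iop_zero, sbr_zero_right]

lemma Iop_neg_left (u v p : ℂ) : Iop u v (-p) 0 = -Iop u v p 0 := by
  simp [Iop_zero, sbr_neg_right, neg_div, neg_mul]

lemma Iop_add_left (u v p q : ℂ) : Iop u v (p + q) 0 = Iop u v p 0 + Iop u v q 0 := by
  simp [Iop_zero, sbr_add_right, add_div, add_mul]

lemma Iop_zero_left (u v : ℂ) : Iop u v 0 0 = 0 := by
  simp [Iop, sbr_zero_right]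

lemma sbr_ne_zero {x y : ℂ} (hx : x * (starRingEnd ℂ) x = 1)
    (hy : y * (starRingEnd ℂ) y = 1) (h1 : x ≠ y) (h2 : x ≠ -y) : sbr x y ≠ 0 := by
  intro h
  have hy0 : y ≠ 0 := by rintro rfl; simp at hy
  have hcy : (starRingEnd ℂ) y ≠ 0 := by simpa using hy0
  have hc : x * (starRingEnd ℂ) y = (starRingEnd ℂ) x * y := sub_eq_zero.mp (by simpa [sbr] using h)
  have key : (x * (starRingEnd ℂ) y - 1) * (x * (starRingEnd ℂ) y + 1) = 0 := by
    linear_combination (x * (starRingEnd ℂ) y) * hc + (y * (starRingEnd ℂ) y) * hx + hy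
  rcases mul_eq_zero.mp key with h' | h'
  · apply h1
    have : x * (starRingEnd ℂ) y = y * (starRingEnd ℂ) y := by rw [sub_eq_zero.mp h', hy]
    exact mul_right_cancel₀ hcy this
  · apply h2
    have : x * (starRingEnd ℂ) y = -y * (starRingEnd ℂ) y := by
      rw [neg_mul, hy]; linear_combination h'
    exact mul_right_cancel₀ hcy this

lemma Iop_add {u v w : ℂ} (huv : sbr u v ≠ 0) (huw : sbr u w ≠ 0)
    (hvw : sbr v w ≠ 0) (p q : ℂ) :
    Iop u v (Iop v w (Iop u w q 0) (Iop u v p 0)) (Iop u w (Iop v w q 0) (Iop v u p 0))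
      = p + q := by
  have hvu : sbr v u ≠ 0 := by rw [sbr_anti u v]; simpa using huv
  have hwu : sbr w u ≠ 0 := by rw [sbr_anti u w]; simpa using huw
  have hwv : sbr w v ≠ 0 := by rw [sbr_anti v w]; simpa using hvw
  have hsm : ∀ a b c x : ℂ, sbr a ((sbr b x / sbr b c) * c) = (sbr b x / sbr b c) * sbr a c :=
    fun a b c x => sbr_real_smul _ _ _ (conj_sbr_div _ _ _)
  have hX : Iop v w (Iop u w q 0) (Iop u v p 0)
      = (sbr u q / sbr u w) * w + (sbr u p / sbr u v) * v := by
    rw [Iop_split, Iop_zero, Iop_zero, Iop_zero, Iop_zero, hsm, hsm]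
    rw [mul_div_assoc, div_self hvw, mul_one, mul_div_assoc, div_self hwv, mul_one]
  have hY : Iop u w (Iop v w q 0) (Iop v u p 0)
      = (sbr v q / sbr v w) * w + (sbr v p / sbr v u) * u := by
    rw [Iop_split, Iop_zero, Iop_zero, Iop_zero, Iop_zero, hsm, hsm]
    rw [mul_div_assoc, div_self huw, mul_one, mul_div_assoc, div_self hwu, mul_one]
  rw [hX, hY, Iop_split, Iop_zero, Iop_zero, sbr_add_right, sbr_add_right,
    hsm, hsm, hsm, hsm, div_mul_cancel₀ _ huw, div_mul_cancel₀ _ huv,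
    div_mul_cancel₀ _ hvw, div_mul_cancel₀ _ hvu,
    add_comm (sbr u q) (sbr u p), add_comm (sbr v q) (sbr v p),
    ← sbr_add_right, ← sbr_add_right, sbr_decomp huv (p + q)]

lemma Iop_recombine {u v : ℂ} (huv : sbr u v ≠ 0) (x : ℂ) :
    Iop u v (-(Iop u v x 0)) (-(Iop v u x 0)) = -x := by
  have hvu : sbr v u ≠ 0 := by rw [sbr_anti u v]; simpa using huv
  have hsm : ∀ a b c y : ℂ, sbr a ((sbr b y / sbr b c) * c) = (sbr b y / sbr b c) * sbr a c :=
    fun a b c y => sbr_real_smul _ _ _ (conj_sbr_div _ _ _)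
  rw [Iop_split]
  simp only [Iop_zero, sbr_neg_right]
  rw [hsm, hsm, div_mul_cancel₀ _ huv, div_mul_cancel₀ _ hvu, neg_div, neg_div,
    neg_mul, neg_mul, ← neg_add, sbr_decomp huv x]

/-- Multiplying a point `t*d` on the line `ℝd` by `-h²` is a single fold. -/
lemma Iop_line {h d : ℂ} (hh : h * (starRingEnd ℂ) h = 1) (hd : d * (starRingEnd ℂ) d = 1)
    (hne : h * h ≠ 1) (t : ℂ) (ht : (starRingEnd ℂ) t = t) :
    Iop (h * d) (h * h * d) (t * d) 0 = -(h * h) * (t * d) := by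
  have hch : (starRingEnd ℂ) h - h ≠ 0 := by
    intro e
    exact hne (by rw [show h * h = h * (starRingEnd ℂ) h by rw [sub_eq_zero.mp e], hh])
  have e1 : sbr (h * d) (t * d) = t * (h - (starRingEnd ℂ) h) := by
    simp only [sbr, map_mul, ht]
    linear_combination (t * (h - (starRingEnd ℂ) h)) * hd
  have e2 : sbr (h * d) (h * h * d) = (starRingEnd ℂ) h - h := by
    simp only [sbr, map_mul]
    linear_combination (((starRingEnd ℂ) h) - h) * hd * (h * (starRingEnd ℂ) h) +
      ((starRingEnd ℂ) h - h) * hh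
  rw [Iop_zero, e1, e2, show t * (h - (starRingEnd ℂ) h) = -t * ((starRingEnd ℂ) h - h) by ring,
    mul_div_assoc, div_self hch]
  ring

/-- `-1` is a monomial: the three-fold chain `1 ↦ -h² ↦ h⁴ ↦ -1`. -/
lemma neg_one_value1 {h : ℂ} (hh : h * (starRingEnd ℂ) h = 1) (hne : h * h ≠ 1) :
    Iop h (h * h) 1 0 = -(h * h) := by
  have h2 := Iop_line (d := 1) hh (by simp) hne 1 (by simp)
  rw [mul_one, mul_one, one_mul, mul_one] at h2
  exact h2

lemma neg_one_value2 {h : ℂ} (hh : h * (starRingEnd ℂ) h = 1) (hne : h * h ≠ 1) :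
    Iop (h * (h * h)) (h * h * (h * h)) (-(h * h)) 0 = h * h * (h * h) := by
  have hd : (h * h) * (starRingEnd ℂ) (h * h) = 1 := by
    rw [map_mul]; linear_combination (h * (starRingEnd ℂ) h + 1) * hh
  have := Iop_line hh hd hne (-1) (by simp)
  rw [show (-1 : ℂ) * (h * h) = -(h * h) by ring] at this
  rw [this]; ring

lemma neg_one_value3 {h : ℂ} (hh : h * (starRingEnd ℂ) h = 1) (hne4 : h * h * (h * h) ≠ 1) :
    Iop (h * h) 1 (h * h * (h * h)) 0 = -1 := by
  have e1 : sbr (h * h) (h * h * (h * h)) =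
      ((starRingEnd ℂ) h * (starRingEnd ℂ) h) - h * h := by
    simp only [sbr, map_mul]
    linear_combination (((starRingEnd ℂ) h)*((starRingEnd ℂ) h) - h*h) * (h * (starRingEnd ℂ) h + 1) * hh
  have e2 : sbr (h * h) 1 = h * h - (starRingEnd ℂ) h * (starRingEnd ℂ) h := by
    simp [sbr, map_mul]
  have hne : h * h - (starRingEnd ℂ) h * (starRingEnd ℂ) h ≠ 0 := by
    intro e
    apply hne4
    have : h * h = (starRingEnd ℂ) h * (starRingEnd ℂ) h := sub_eq_zero.mp e
    calc h * h * (h * h) = h * h * ((starRingEnd ℂ) h * (starRingEnd ℂ) h) := by rw [← this]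
      _ = (h * (starRingEnd ℂ) h) * (h * (starRingEnd ℂ) h) := by ring
      _ = 1 := by rw [hh]; ring
  rw [Iop_zero, e1, e2, show (starRingEnd ℂ) h * (starRingEnd ℂ) h - h * h
      = -(h * h - (starRingEnd ℂ) h * (starRingEnd ℂ) h) by ring, neg_div, div_self hne]
  ring


lemma unit_ne_zero {z : ℂ} (hz : z * (starRingEnd ℂ) z = 1) : z ≠ 0 := by
  rintro rfl; simp at hz

lemma four_ne {g : ℂ} (h4 : g * g * (g * g) ≠ 1) :
    g ≠ 1 ∧ g ≠ -1 ∧ g * g ≠ 1 := by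
  refine ⟨?_, ?_, ?_⟩ <;> intro e
  · apply h4; rw [e]; ring
  · apply h4; rw [e]; ring
  · apply h4; rw [e]; ring

lemma step_ne {g d : ℂ} (hg0 : g ≠ 0) (hd0 : d ≠ 0) (h1 : g ≠ 1) (h2 : g ≠ -1) :
    g * d ≠ g * g * d ∧ g * d ≠ -(g * g * d) := by
  constructor
  · intro e; apply h1
    have : (1 - g) * (g * d) = 0 := by linear_combination e
    rcases mul_eq_zero.mp this with e' | e'
    · linear_combination -e'
    · exact absurd (mul_eq_zero.mp e') (by simp [hg0, hd0])
  · intro e; apply h2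
    have : (1 + g) * (g * d) = 0 := by linear_combination e
    rcases mul_eq_zero.mp this with e' | e'
    · linear_combination e'
    · exact absurd (mul_eq_zero.mp e') (by simp [hg0, hd0])

/-- negation of a point on a line through the origin with direction in `U`. -/
lemma R_neg_line (U : Set ℂ) (hmul : ∀ a ∈ U, ∀ b ∈ U, a * b ∈ U)
    (hunit : ∀ z ∈ U, z * (starRingEnd ℂ) z = 1)
    {h : ℂ} (hhU : h ∈ U) (hkU : (starRingEnd ℂ) h ∈ U) (h4 : h * h * (h * h) ≠ 1)
    {d : ℂ} (hdU : d ∈ U) {t : ℂ} (ht : (starRingEnd ℂ) t = t)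
    (hx : origamiPts U (t * d)) : origamiPts U (-(t * d)) := by
  obtain ⟨h1, h2, hsq⟩ := four_ne h4
  have hh := hunit h hhU
  have hd := hunit d hdU
  have hh0 := unit_ne_zero hh
  have hd0 := unit_ne_zero hd
  obtain ⟨k, hk⟩ : ∃ k, k = (starRingEnd ℂ) h * (starRingEnd ℂ) h := ⟨_, rfl⟩
  have hkk : k * (starRingEnd ℂ) k = 1 := by
    rw [hk, map_mul, Complex.conj_conj]
    linear_combination (h * (starRingEnd ℂ) h + 1) * hh
  have k1 : k ≠ 1 := by
    intro e; rw [hk] at e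
    exact hsq (by simpa using congrArg (starRingEnd ℂ) e)
  have k2 : k ≠ -1 := by
    intro e; rw [hk] at e
    have e2 : h * h = -1 := by simpa using congrArg (starRingEnd ℂ) e
    apply h4; rw [e2]; norm_num
  have ksq : k * k ≠ 1 := by
    intro e; rw [hk] at e
    apply h4
    have e2 := congrArg (starRingEnd ℂ) e
    simp only [map_mul, map_one, Complex.conj_conj] at e2
    linear_combination e2
  have hk0 := unit_ne_zero hkk
  -- step 1 : t*d ↦ -(h*h)*(t*d) = (-t)*(h*h*d)
  have hd2U : h * h * d ∈ U := hmul _ (hmul _ hhU _ hhU) _ hdU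
  have hd2 : (h * h * d) * (starRingEnd ℂ) (h * h * d) = 1 := hunit _ hd2U
  have hd20 := unit_ne_zero hd2
  obtain ⟨ne1, ne2⟩ := step_ne hh0 hd0 h1 h2
  have s1 : origamiPts U (Iop (h * d) (h * h * d) (t * d) 0) :=
    origamiPts.inter (hmul _ hhU _ hdU) hd2U ne1 ne2 hx origamiPts.zero
  rw [Iop_line hh hd hsq t ht] at s1
  rw [show -(h * h) * (t * d) = (-t) * (h * h * d) by ring] at s1
  -- step 2
  have hd3U : h * h * (h * h * d) ∈ U := hmul _ (hmul _ hhU _ hhU) _ hd2U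
  obtain ⟨ne3, ne4⟩ := step_ne hh0 hd20 h1 h2
  have s2 : origamiPts U (Iop (h * (h * h * d)) (h * h * (h * h * d)) ((-t) * (h * h * d)) 0) :=
    origamiPts.inter (hmul _ hhU _ hd2U) hd3U ne3 ne4 s1 origamiPts.zero
  rw [Iop_line hh hd2 hsq (-t) (by rw [map_neg, ht])] at s2
  rw [show -(h * h) * (-t * (h * h * d)) = t * (h * h * (h * h * d)) by ring] at s2
  -- step 3 : multiply by -(k*k) with k = conj h * conj h
  have hd3 : (h * h * (h * h * d)) * (starRingEnd ℂ) (h * h * (h * h * d)) = 1 := hunit _ hd3U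
  have hd30 := unit_ne_zero hd3
  have hkUU : k ∈ U := by rw [hk]; exact hmul _ hkU _ hkU
  obtain ⟨ne5, ne6⟩ := step_ne hk0 hd30 k1 k2
  have s3 : origamiPts U (Iop (k * (h * h * (h * h * d))) (k * k * (h * h * (h * h * d)))
      (t * (h * h * (h * h * d))) 0) :=
    origamiPts.inter (hmul _ hkUU _ hd3U) (hmul _ (hmul _ hkUU _ hkUU) _ hd3U) ne5 ne6 s2
      origamiPts.zero
  rw [Iop_line hkk hd3 ksq t ht] at s3
  have e1 : (h * (starRingEnd ℂ) h) * (h * (starRingEnd ℂ) h) *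
      ((h * (starRingEnd ℂ) h) * (h * (starRingEnd ℂ) h)) = 1 := by rw [hh]; norm_num
  have final : -(k * k) * (t * (h * h * (h * h * d))) = -(t * d) := by
    linear_combination (-(t * d)) * (k + (starRingEnd ℂ) h * (starRingEnd ℂ) h) *
      (h * h * (h * h)) * hk - (t * d) * e1
  rwa [final] at s3

lemma neg_swap {u v : ℂ} (h : u ≠ -v) : v ≠ -u := by
  intro e; exact h (by rw [e, neg_neg])

lemma R_neg (U : Set ℂ) (hmul : ∀ a ∈ U, ∀ b ∈ U, a * b ∈ U)
    (hunit : ∀ z ∈ U, z * (starRingEnd ℂ) z = 1)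
    {u v : ℂ} (huU : u ∈ U) (hvU : v ∈ U) (huv : u ≠ v) (huv' : u ≠ -v)
    {h : ℂ} (hhU : h ∈ U) (hkU : (starRingEnd ℂ) h ∈ U) (h4 : h * h * (h * h) ≠ 1)
    {x : ℂ} (hx : origamiPts U x) : origamiPts U (-x) := by
  have hsuv : sbr u v ≠ 0 := sbr_ne_zero (hunit u huU) (hunit v hvU) huv huv'
  have hA : origamiPts U (Iop u v x 0) :=
    origamiPts.inter huU hvU huv huv' hx origamiPts.zero
  have hB : origamiPts U (Iop v u x 0) :=
    origamiPts.inter hvU huU (Ne.symm huv) (neg_swap huv') hx origamiPts.zero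
  rw [Iop_zero] at hA hB
  have hA' : origamiPts U (-((sbr u x / sbr u v) * v)) :=
    R_neg_line U hmul hunit hhU hkU h4 hvU (conj_sbr_div u x v) hA
  have hB' : origamiPts U (-((sbr v x / sbr v u) * u)) :=
    R_neg_line U hmul hunit hhU hkU h4 huU (conj_sbr_div v x u) hB
  have := origamiPts.inter huU hvU huv huv' hA' hB'
  rw [show ((sbr u x / sbr u v) * v) = Iop u v x 0 from (Iop_zero u v x).symm,
    show ((sbr v x / sbr v u) * u) = Iop v u x 0 from (Iop_zero v u x).symm,
    Iop_recombine hsuv x] at this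
  exact this

lemma R_add (U : Set ℂ)
    (hunit : ∀ z ∈ U, z * (starRingEnd ℂ) z = 1)
    {u v w : ℂ} (huU : u ∈ U) (hvU : v ∈ U) (hwU : w ∈ U)
    (huv : u ≠ v) (huv' : u ≠ -v) (huw : u ≠ w) (huw' : u ≠ -w)
    (hvw : v ≠ w) (hvw' : v ≠ -w)
    {p q : ℂ} (hp : origamiPts U p) (hq : origamiPts U q) :
    origamiPts U (p + q) := by
  have hsuv : sbr u v ≠ 0 := sbr_ne_zero (hunit u huU) (hunit v hvU) huv huv'
  have hsuw : sbr u w ≠ 0 := sbr_ne_zero (hunit u huU) (hunit w hwU) huw huw'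
  have hsvw : sbr v w ≠ 0 := sbr_ne_zero (hunit v hvU) (hunit w hwU) hvw hvw'
  have A1 : origamiPts U (Iop u w q 0) :=
    origamiPts.inter huU hwU huw huw' hq origamiPts.zero
  have A2 : origamiPts U (Iop u v p 0) :=
    origamiPts.inter huU hvU huv huv' hp origamiPts.zero
  have B1 : origamiPts U (Iop v w q 0) :=
    origamiPts.inter hvU hwU hvw hvw' hq origamiPts.zero
  have B2 : origamiPts U (Iop v u p 0) :=
    origamiPts.inter hvU huU (Ne.symm huv) (neg_swap huv') hp origamiPts.zero
  have hX : origamiPts U (Iop v w (Iop u w q 0) (Iop u v p 0)) :=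
    origamiPts.inter hvU hwU hvw hvw' A1 A2
  have hY : origamiPts U (Iop u w (Iop v w q 0) (Iop v u p 0)) :=
    origamiPts.inter huU hwU huw huw' B1 B2
  have := origamiPts.inter huU hvU huv huv' hX hY
  rwa [Iop_add hsuv hsuw hsvw p q] at this

lemma M_neg_one (U : Set ℂ) (hone : (1 : ℂ) ∈ U)
    (hmul : ∀ a ∈ U, ∀ b ∈ U, a * b ∈ U)
    (hunit : ∀ z ∈ U, z * (starRingEnd ℂ) z = 1)
    {h : ℂ} (hhU : h ∈ U) (h4 : h * h * (h * h) ≠ 1) : origamiMon U (-1) := by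
  obtain ⟨h1, h2, hsq⟩ := four_ne h4
  have hh := hunit h hhU
  have hh0 := unit_ne_zero hh
  have hsq' : h * h ≠ -1 := by
    intro e; apply h4; rw [e]; norm_num
  have n1 : h ≠ h * h := by
    intro e
    exact h1 (mul_left_cancel₀ hh0 (show h * 1 = h * h by linear_combination e)).symm
  have n2 : h ≠ -(h * h) := by
    intro e
    exact h2 (mul_left_cancel₀ hh0 (show h * h = h * (-1) by linear_combination e))
  have h2U : h * h ∈ U := hmul _ hhU _ hhU
  have m1 : origamiMon U (Iop h (h * h) 1 0) :=
    origamiMon.step hhU h2U n1 n2 origamiMon.one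
  rw [neg_one_value1 hh hsq] at m1
  have hsq0 : h * h ≠ 0 := unit_ne_zero (hunit _ h2U)
  obtain ⟨n3, n4⟩ := step_ne hh0 hsq0 h1 h2
  have m2 : origamiMon U (Iop (h * (h * h)) (h * h * (h * h)) (-(h * h)) 0) :=
    origamiMon.step (hmul _ hhU _ h2U) (hmul _ h2U _ h2U) n3 n4 m1
  rw [neg_one_value2 hh hsq] at m2
  have m3 : origamiMon U (Iop (h * h) 1 (h * h * (h * h)) 0) :=
    origamiMon.step h2U hone hsq hsq' m2
  rw [neg_one_value3 hh h4] at m3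
  exact m3

lemma M_neg (U : Set ℂ) (hneg1 : origamiMon U (-1)) {m : ℂ}
    (hm : origamiMon U m) : origamiMon U (-m) := by
  induction hm with
  | one => exact hneg1
  | step hu hv huv huv' hp ih => rw [← Iop_neg_left]; exact origamiMon.step hu hv huv huv' ih

lemma closure_step (U : Set ℂ) {u v : ℂ} (hu : u ∈ U) (hv : v ∈ U)
    (huv : u ≠ v) (huv' : u ≠ -v) {z : ℂ}
    (hz : z ∈ AddSubgroup.closure {z : ℂ | origamiMon U z}) :
    Iop u v z 0 ∈ AddSubgroup.closure {z : ℂ | origamiMon U z} := by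
  let φ : ℂ →+ ℂ := AddMonoidHom.mk' (fun x => Iop u v x 0) (Iop_add_left u v)
  have hle : AddSubgroup.closure {z : ℂ | origamiMon U z} ≤
      AddSubgroup.comap φ (AddSubgroup.closure {z : ℂ | origamiMon U z}) :=
    (AddSubgroup.closure_le _).mpr
      (fun m hm => AddSubgroup.subset_closure (origamiMon.step hu hv huv huv' hm))
  exact hle hz

lemma exists_h (s : Finset ℂ) (hs6 : 6 ≤ s.card) : ∃ h ∈ s, h * h * (h * h) ≠ 1 := by
  by_contra hc
  push_neg at hc
  have hsub : s ⊆ (Polynomial.nthRoots 4 (1 : ℂ)).toFinset := by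
    intro z hz
    rw [Multiset.mem_toFinset, Polynomial.mem_nthRoots (by norm_num : (0:ℕ) < 4)]
    rw [← hc z hz]; ring
  have h1 := Finset.card_le_card hsub
  have h2 : (Polynomial.nthRoots 4 (1 : ℂ)).toFinset.card ≤ 4 :=
    le_trans (Multiset.toFinset_card_le _) (by simpa using Polynomial.card_nthRoots 4 (1 : ℂ))
  omega

lemma exists_uvw (s : Finset ℂ) (hs6 : 6 ≤ s.card) :
    ∃ u ∈ s, ∃ v ∈ s, ∃ w ∈ s, u ≠ v ∧ u ≠ -v ∧ u ≠ w ∧ u ≠ -w ∧ v ≠ w ∧ v ≠ -w := by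
  classical
  obtain ⟨u, hu⟩ := Finset.card_pos.mp (by omega : 0 < s.card)
  have hc1 : ({u, -u} : Finset ℂ).card ≤ 2 :=
    le_trans (Finset.card_insert_le _ _) (by simp)
  have h2 : 4 ≤ (s \ {u, -u}).card := by
    have := Finset.card_le_card_sdiff_add_card (s := s) (t := ({u, -u} : Finset ℂ))
    omega
  obtain ⟨v, hv⟩ := Finset.card_pos.mp (by omega : 0 < (s \ {u, -u}).card)
  have hc2 : ({v, -v} : Finset ℂ).card ≤ 2 :=
    le_trans (Finset.card_insert_le _ _) (by simp)
  have h3 : 2 ≤ ((s \ {u, -u}) \ {v, -v}).card := by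
    have := Finset.card_le_card_sdiff_add_card (s := s \ {u, -u}) (t := ({v, -v} : Finset ℂ))
    omega
  obtain ⟨w, hw⟩ := Finset.card_pos.mp (by omega : 0 < ((s \ {u, -u}) \ {v, -v}).card)
  rw [Finset.mem_sdiff] at hv
  rw [Finset.mem_sdiff, Finset.mem_sdiff] at hw
  obtain ⟨hvs, hvne⟩ := hv
  obtain ⟨⟨hws, hwne1⟩, hwne2⟩ := hw
  simp only [Finset.mem_insert, Finset.mem_singleton, not_or] at hvne hwne1 hwne2
  refine ⟨u, hu, v, hvs, w, hws, ?_, ?_, ?_, ?_, ?_, ?_⟩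
  · exact fun e => hvne.1 e.symm
  · exact fun e => hvne.2 (by rw [e, neg_neg])
  · exact fun e => hwne1.1 e.symm
  · exact fun e => hwne1.2 (by rw [e, neg_neg])
  · exact fun e => hwne2.1 e.symm
  · exact fun e => hwne2.2 (by rw [e, neg_neg])

lemma M_sub_R (U : Set ℂ) {m : ℂ} (hm : origamiMon U m) : origamiPts U m := by
  induction hm with
  | one => exact origamiPts.one
  | step hu hv huv huv' hp ih => exact origamiPts.inter hu hv huv huv' ih origamiPts.zero

/-- `R(U)` is the additive subgroup of `ℂ` generated by the monomials `M(U)`,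
i.e., the set of finite integer linear combinations of monomials. -/
theorem stmt_8 (U : Set ℂ)
    (hsub : ∀ z ∈ U, ‖z‖ = 1)
    (hone : (1 : ℂ) ∈ U)
    (hmul : ∀ a ∈ U, ∀ b ∈ U, a * b ∈ U)
    (hinv : ∀ a ∈ U, a⁻¹ ∈ U)
    (hneg : (-1 : ℂ) ∈ U)
    (hcard : ∃ s : Finset ℂ, ↑s ⊆ U ∧ 6 ≤ s.card)
    : {z : ℂ | origamiPts U z} =
      (AddSubgroup.closure {z : ℂ | origamiMon U z} : AddSubgroup ℂ) := by
  have hunit : ∀ z ∈ U, z * (starRingEnd ℂ) z = 1 := by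
    intro z hz
    rw [Complex.mul_conj, Complex.normSq_eq_norm_sq, hsub z hz]
    norm_num
  have hconjU : ∀ z ∈ U, (starRingEnd ℂ) z ∈ U := by
    intro z hz
    have h0 : z⁻¹ = (starRingEnd ℂ) z := inv_eq_of_mul_eq_one_right (hunit z hz)
    rw [← h0]
    exact hinv z hz
  obtain ⟨s, hsU, hs6⟩ := hcard
  obtain ⟨h, hhs, h4⟩ := exists_h s hs6
  have hhU : h ∈ U := hsU hhs
  obtain ⟨u, hus, v, hvs, w, hws, huv, huv', huw, huw', hvw, hvw'⟩ := exists_uvw s hs6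
  have huU : u ∈ U := hsU hus
  have hvU : v ∈ U := hsU hvs
  have hwU : w ∈ U := hsU hws
  ext z
  simp only [Set.mem_setOf_eq, SetLike.mem_coe]
  constructor
  · intro hz
    induction hz with
    | zero => exact zero_mem _
    | one => exact AddSubgroup.subset_closure origamiMon.one
    | inter hu hv huv1 huv1' hp hq ihp ihq =>
      rw [Iop_split]
      exact add_mem (closure_step U hu hv huv1 huv1' ihp)
        (closure_step U hv hu (Ne.symm huv1) (neg_swap huv1') ihq)
  · intro hz
    refine AddSubgroup.closure_induction (fun x hx => M_sub_R U hx) origamiPts.zero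
      (fun x y _ _ hx hy =>
        R_add U hunit huU hvU hwU huv huv' huw huw' hvw hvw' hx hy)
      (fun x _ hx =>
        R_neg U hmul hunit huU hvU huv huv' hhU (hconjU h hhU) h4 hx) hz
end

section
/- Let U be a subgroup of the unit circle {z ∈ ℂ : |z| = 1} with −1 ∈ U and with at least 6 elements, and let V = {u² : u ∈ U}. Then R(U) equals the set of all finite integer linear combinations of finite products of complex numbers of the form (1 − a)/(1 − b), where a, b ∈ V and b ≠ 1. -/
section OrigamiAux

lemma o_conj {z : ℂ} (h : ‖z‖ = 1) : (starRingEnd ℂ) z = z⁻¹ := by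
  rw [← Complex.inv_eq_conj (by exact h)]

lemma o_ne {z : ℂ} (h : ‖z‖ = 1) : z ≠ 0 := by
  intro h0; rw [h0] at h; simp at h

lemma o_mul_conj {z : ℂ} (h : ‖z‖ = 1) : z * (starRingEnd ℂ) z = 1 := by
  rw [Complex.mul_conj, Complex.normSq_eq_norm_sq, h]; norm_num

lemma o_abs_sq {z : ℂ} (h : ‖z‖ = 1) : ‖z ^ 2‖ = 1 := by
  rw [norm_pow, h]; norm_num

lemma o_sq_ne {u v : ℂ} (h1 : u ≠ v) (h2 : u ≠ -v) : u ^ 2 ≠ v ^ 2 := by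
  intro h
  rcases mul_eq_zero.1 (show (u - v) * (u + v) = 0 by linear_combination h) with h' | h'
  · exact h1 (sub_eq_zero.1 h')
  · exact h2 (by linear_combination h')

lemma o_ne_of_sq_ne {u v : ℂ} (h : u ^ 2 ≠ v ^ 2) : u ≠ v ∧ u ≠ -v :=
  ⟨fun e => h (by rw [e]), fun e => h (by rw [e]; ring)⟩

noncomputable def F12 (a b x : ℂ) : ℂ := (a * b * (starRingEnd ℂ) x - b * x) / (a - b)

lemma F12_zero (a b : ℂ) : F12 a b 0 = 0 := by simp [F12]

lemma F12_add (a b x y : ℂ) : F12 a b (x + y) = F12 a b x + F12 a b y := by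
  unfold F12; rw [map_add]; ring

lemma F12_neg (a b x : ℂ) : F12 a b (-x) = -F12 a b x := by
  unfold F12; rw [map_neg]; ring

lemma F12_conj {a b : ℂ} (ha : ‖a‖ = 1) (hb : ‖b‖ = 1)
    (hab : a ≠ b) (x : ℂ) :
    (starRingEnd ℂ) (F12 a b x) = (a * (starRingEnd ℂ) x - x) / (a - b) := by
  have ha0 := o_ne ha; have hb0 := o_ne hb
  have h1 : a - b ≠ 0 := sub_ne_zero.2 hab
  have h1' : a⁻¹ - b⁻¹ ≠ 0 := sub_ne_zero.2 (fun h => hab (inv_injective h))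
  unfold F12
  rw [map_div₀, map_sub, map_mul, map_mul, Complex.conj_conj, map_sub,
    o_conj ha, o_conj hb, div_eq_div_iff h1' h1]
  field_simp
  rw [map_mul]
  linear_combination (a * b - a ^ 2) * (starRingEnd ℂ) x * o_mul_conj hb

lemma F12_proj_sum {a b : ℂ} (hab : a ≠ b) (x : ℂ) : F12 a b x + F12 b a x = x := by
  have h1 : a - b ≠ 0 := sub_ne_zero.2 hab
  unfold F12
  rw [show b - a = -(a - b) by ring, div_neg, ← sub_eq_add_neg, div_sub_div_same,
    div_eq_iff h1]
  ring

lemma F12_reproj {a b c : ℂ} (ha : ‖a‖ = 1) (hb : ‖b‖ = 1)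
    (hab : a ≠ b) (hcb : c ≠ b) (x : ℂ) :
    F12 c b (F12 a b x) = F12 a b x := by
  have h1 : a - b ≠ 0 := sub_ne_zero.2 hab
  have h2 : c - b ≠ 0 := sub_ne_zero.2 hcb
  conv_lhs => rw [F12]
  rw [F12_conj ha hb hab]
  unfold F12
  rw [div_eq_div_iff h2 h1]
  field_simp

lemma F12_comp {a b c d : ℂ} (ha : ‖a‖ = 1) (hb : ‖b‖ = 1)
    (hab : a ≠ b) (hcd : c ≠ d) (x : ℂ) :
    F12 c d (F12 a b x) =
      d * (c - b) * (a * (starRingEnd ℂ) x - x) / ((a - b) * (c - d)) := by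
  have h1 : a - b ≠ 0 := sub_ne_zero.2 hab
  have h2 : c - d ≠ 0 := sub_ne_zero.2 hcd
  conv_lhs => rw [F12]
  rw [F12_conj ha hb hab]
  unfold F12
  rw [div_eq_div_iff h2 (mul_ne_zero h1 h2)]
  field_simp

theorem F_add_identity {a b c : ℂ} (ha : ‖a‖ = 1) (hb : ‖b‖ = 1)
    (hc : ‖c‖ = 1) (hab : a ≠ b) (hac : a ≠ c) (hbc : b ≠ c) (p q : ℂ) :
    F12 a b (F12 c b (F12 a b p) + F12 b c (F12 a c q)) +
      F12 b a (F12 c a (F12 b a p) + F12 a c (F12 b c q)) = p + q := by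
  have h1 : a - b ≠ 0 := sub_ne_zero.2 hab
  have h2 : b - a ≠ 0 := sub_ne_zero.2 hab.symm
  have h3 : a - c ≠ 0 := sub_ne_zero.2 hac
  rw [F12_add, F12_add]
  rw [F12_reproj ha hb hab hbc.symm p, F12_reproj hb ha hab.symm hac.symm p]
  rw [F12_reproj ha hc hac hbc q, F12_reproj hb hc hbc hac q]
  rw [F12_reproj ha hb hab hab p, F12_reproj hb ha hab.symm hab.symm p]
  have h5 : b - c ≠ 0 := sub_ne_zero.2 hbc
  have hq : F12 a b (F12 a c q) + F12 b a (F12 b c q) = q := by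
    rw [F12_comp ha hc hac hab q, F12_comp hb hc hbc hab.symm q]
    rw [div_add_div _ _ (mul_ne_zero h3 h1) (mul_ne_zero h5 h2),
      div_eq_iff (mul_ne_zero (mul_ne_zero h3 h1) (mul_ne_zero h5 h2))]
    ring
  linear_combination F12_proj_sum hab p + hq

lemma Iop_eq {u v : ℂ} (hu : ‖u‖ = 1) (hv : ‖v‖ = 1)
    (h : u ^ 2 ≠ v ^ 2) (p q : ℂ) :
    Iop u v p q = F12 (u ^ 2) (v ^ 2) p + F12 (v ^ 2) (u ^ 2) q := by
  have hu0 := o_ne hu; have hv0 := o_ne hv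
  have h1 : u ^ 2 - v ^ 2 ≠ 0 := sub_ne_zero.2 h
  have h2 : v ^ 2 - u ^ 2 ≠ 0 := sub_ne_zero.2 (Ne.symm h)
  have e1 : u * v⁻¹ - u⁻¹ * v = (u ^ 2 - v ^ 2) / (u * v) := by field_simp
  have e2 : v * u⁻¹ - v⁻¹ * u = (v ^ 2 - u ^ 2) / (v * u) := by field_simp
  unfold Iop sbr F12
  rw [o_conj hu, o_conj hv, e1, e2]
  field_simp

end OrigamiAux

section OrigamiMain

/-- the set of squares -/
def VS (U : Set ℂ) : Set ℂ := (fun u : ℂ => u ^ 2) '' U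

/-- the generators -/
def GS (U : Set ℂ) : Set ℂ :=
  {z : ℂ | ∃ a ∈ VS U, ∃ b ∈ VS U, b ≠ 1 ∧ z = (1 - a) / (1 - b)}

variable {U : Set ℂ}

lemma VS_abs (hsub : ∀ z ∈ U, ‖z‖ = 1) {a : ℂ} (ha : a ∈ VS U) :
    ‖a‖ = 1 := by
  obtain ⟨u, hu, rfl⟩ := ha
  exact o_abs_sq (hsub u hu)

lemma VS_one (hone : (1 : ℂ) ∈ U) : (1 : ℂ) ∈ VS U := ⟨1, hone, one_pow 2⟩

lemma VS_mul (hmul : ∀ a ∈ U, ∀ b ∈ U, a * b ∈ U) {a b : ℂ}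
    (ha : a ∈ VS U) (hb : b ∈ VS U) : a * b ∈ VS U := by
  obtain ⟨u, hu, rfl⟩ := ha; obtain ⟨v, hv, rfl⟩ := hb
  exact ⟨u * v, hmul u hu v hv, mul_pow u v 2⟩

lemma VS_inv (hinv : ∀ a ∈ U, a⁻¹ ∈ U) {a : ℂ} (ha : a ∈ VS U) : a⁻¹ ∈ VS U := by
  obtain ⟨u, hu, rfl⟩ := ha
  exact ⟨u⁻¹, hinv u hu, inv_pow u 2⟩

lemma GS_neg_mem (hsub : ∀ z ∈ U, ‖z‖ = 1) (hinv : ∀ a ∈ U, a⁻¹ ∈ U)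
    {x : ℂ} (hx : x ∈ VS U) (hx1 : x ≠ 1) : -x ∈ GS U := by
  have hx0 : x ≠ 0 := o_ne (VS_abs hsub hx)
  have hxi1 : x⁻¹ ≠ 1 := fun h => hx1 (by rw [← inv_inv x, h, inv_one])
  refine ⟨x, hx, x⁻¹, VS_inv hinv hx, hxi1, ?_⟩
  rw [eq_div_iff (sub_ne_zero.2 (Ne.symm hxi1))]
  field_simp
  ring

lemma conj_rel (hsub : ∀ z ∈ U, ‖z‖ = 1) (hone : (1 : ℂ) ∈ U)
    (hmul : ∀ a ∈ U, ∀ b ∈ U, a * b ∈ U) (hinv : ∀ a ∈ U, a⁻¹ ∈ U) :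
    ∀ m ∈ Submonoid.closure (GS U), ∃ w ∈ VS U, (starRingEnd ℂ) m = m * w := by
  intro m hm
  induction hm using Submonoid.closure_induction with
  | mem z hz =>
    obtain ⟨a, haV, b, hbV, hb1, rfl⟩ := hz
    have ha0 : a ≠ 0 := o_ne (VS_abs hsub haV)
    have hb0 : b ≠ 0 := o_ne (VS_abs hsub hbV)
    have hb1' : (1 : ℂ) - b ≠ 0 := sub_ne_zero.2 (Ne.symm hb1)
    have hbi1 : b⁻¹ ≠ 1 := fun h => hb1 (by rw [← inv_inv b, h, inv_one])
    have hb1'' : (1 : ℂ) - b⁻¹ ≠ 0 := sub_ne_zero.2 (Ne.symm hbi1)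
    refine ⟨b * a⁻¹, VS_mul hmul hbV (VS_inv hinv haV), ?_⟩
    rw [map_div₀, map_sub, map_sub, map_one, o_conj (VS_abs hsub haV),
      o_conj (VS_abs hsub hbV)]
    rw [div_mul_eq_mul_div, div_eq_div_iff hb1'' hb1']
    field_simp
    ring
  | one => exact ⟨1, VS_one hone, by simp⟩
  | mul x y hx hy ihx ihy =>
    obtain ⟨wx, hwx, ex⟩ := ihx
    obtain ⟨wy, hwy, ey⟩ := ihy
    exact ⟨wx * wy, VS_mul hmul hwx hwy, by rw [map_mul, ex, ey]; ring⟩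

lemma o_sq_cases {x y : ℂ} (h : x ^ 2 = y ^ 2) : x = y ∨ x = -y := by
  by_contra hc
  push_neg at hc
  exact o_sq_ne hc.1 hc.2 h

lemma exists_three (hcard : ∃ s : Finset ℂ, ↑s ⊆ U ∧ 6 ≤ s.card) :
    ∃ u ∈ U, ∃ v ∈ U, ∃ w ∈ U, u ^ 2 ≠ v ^ 2 ∧ u ^ 2 ≠ w ^ 2 ∧ v ^ 2 ≠ w ^ 2 := by
  classical
  obtain ⟨s, hsU, hs6⟩ := hcard
  set t := s.image (fun x : ℂ => x ^ 2) with ht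
  have hfib : ∀ b ∈ t, (s.filter (fun x => x ^ 2 = b)).card ≤ 2 := by
    intro b hb
    obtain ⟨y, _, hyb⟩ := Finset.mem_image.1 hb
    have hss : s.filter (fun x => x ^ 2 = b) ⊆ {y, -y} := by
      intro x hx
      rw [Finset.mem_filter] at hx
      have : x ^ 2 = y ^ 2 := by rw [hx.2, ← hyb]
      rcases o_sq_cases this with h | h <;> simp [h]
    calc (s.filter (fun x => x ^ 2 = b)).card ≤ ({y, -y} : Finset ℂ).card :=
          Finset.card_le_card hss
      _ ≤ 2 := Finset.card_insert_le y {-y}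
  have h2 : s.card ≤ 2 * t.card := Finset.card_le_mul_card_image s 2 hfib
  have h3 : 3 ≤ t.card := by omega
  obtain ⟨A, hA⟩ := Finset.card_pos.1 (by omega : 0 < t.card)
  have hcA : 2 ≤ (t.erase A).card := by rw [Finset.card_erase_of_mem hA]; omega
  obtain ⟨B, hB⟩ := Finset.card_pos.1 (by omega : 0 < (t.erase A).card)
  have hcB : 1 ≤ ((t.erase A).erase B).card := by
    rw [Finset.card_erase_of_mem hB]; omega
  obtain ⟨C, hC⟩ := Finset.card_pos.1 (by omega : 0 < ((t.erase A).erase B).card)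
  have hBA : B ≠ A := (Finset.mem_erase.1 hB).1
  have hCB : C ≠ B := (Finset.mem_erase.1 hC).1
  have hCA : C ≠ A := (Finset.mem_erase.1 (Finset.mem_erase.1 hC).2).1
  have hBt : B ∈ t := (Finset.mem_erase.1 hB).2
  have hCt : C ∈ t := (Finset.mem_erase.1 (Finset.mem_erase.1 hC).2).2
  obtain ⟨u, hu, hu2⟩ := Finset.mem_image.1 hA
  obtain ⟨v, hv, hv2⟩ := Finset.mem_image.1 hBt
  obtain ⟨w, hw, hw2⟩ := Finset.mem_image.1 hCt
  refine ⟨u, hsU hu, v, hsU hv, w, hsU hw, ?_, ?_, ?_⟩ <;>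
    simp only [hu2, hv2, hw2]
  · exact fun h => hBA h.symm
  · exact fun h => hCA h.symm
  · exact fun h => hCB h.symm

lemma pick3 {A B C : ℂ} (hab : A ≠ B) (hac : A ≠ C) (hbc : B ≠ C) :
    (A ≠ 1 ∧ A ≠ -1) ∨ (B ≠ 1 ∧ B ≠ -1) ∨ (C ≠ 1 ∧ C ≠ -1) := by
  by_contra h
  push_neg at h
  obtain ⟨h1, h2, h3⟩ := h
  have hA : A = 1 ∨ A = -1 := by
    by_cases hx : A = 1
    · exact Or.inl hx
    · exact Or.inr (h1 hx)
  have hB : B = 1 ∨ B = -1 := by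
    by_cases hx : B = 1
    · exact Or.inl hx
    · exact Or.inr (h2 hx)
  have hC : C = 1 ∨ C = -1 := by
    by_cases hx : C = 1
    · exact Or.inl hx
    · exact Or.inr (h3 hx)
  rcases hA with rfl | rfl <;> rcases hB with rfl | rfl <;> rcases hC with rfl | rfl <;>
    first
      | exact hab rfl
      | exact hac rfl
      | exact hbc rfl

lemma exists_good (hcard : ∃ s : Finset ℂ, ↑s ⊆ U ∧ 6 ≤ s.card) :
    ∃ x ∈ VS U, x ≠ 1 ∧ x ≠ -1 := by
  obtain ⟨u, hu, v, hv, w, hw, hab, hac, hbc⟩ := exists_three hcard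
  rcases pick3 hab hac hbc with h | h | h
  · exact ⟨u ^ 2, ⟨u, hu, rfl⟩, h⟩
  · exact ⟨v ^ 2, ⟨v, hv, rfl⟩, h⟩
  · exact ⟨w ^ 2, ⟨w, hw, rfl⟩, h⟩

end OrigamiMain

section OrigamiFinal

variable {U : Set ℂ}

lemma S_mul :
    ∀ x ∈ AddSubgroup.closure (SetLike.coe (Submonoid.closure (GS U))),
      ∀ y ∈ AddSubgroup.closure (SetLike.coe (Submonoid.closure (GS U))),
        x * y ∈ AddSubgroup.closure (SetLike.coe (Submonoid.closure (GS U))) := by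
  intro x hx
  refine AddSubgroup.closure_induction
    (p := fun g _ => ∀ y ∈ AddSubgroup.closure (SetLike.coe (Submonoid.closure (GS U))),
      g * y ∈ AddSubgroup.closure (SetLike.coe (Submonoid.closure (GS U))))
    (fun m hm => ?_)
    (fun y hy => by show (0 : ℂ) * y ∈ _; rw [zero_mul]; exact zero_mem _)
    (fun g h _ _ ihg ihh y hy => by
      show (g + h) * y ∈ _; rw [add_mul]; exact add_mem (ihg y hy) (ihh y hy))
    (fun g _ ihg y hy => by
      show -g * y ∈ _; rw [neg_mul]; exact neg_mem (ihg y hy)) hx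
  intro y hy
  refine AddSubgroup.closure_induction
    (p := fun g _ => m * g ∈ AddSubgroup.closure (SetLike.coe (Submonoid.closure (GS U))))
    (fun n hn => AddSubgroup.subset_closure (mul_mem hm hn))
    (by show m * 0 ∈ _; rw [mul_zero]; exact zero_mem _)
    (fun g h _ _ ih1 ih2 => by show m * (g + h) ∈ _; rw [mul_add]; exact add_mem ih1 ih2)
    (fun g _ ih => by show m * -g ∈ _; rw [mul_neg]; exact neg_mem ih) hy

lemma F_closed (hsub : ∀ z ∈ U, ‖z‖ = 1) (hone : (1 : ℂ) ∈ U)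
    (hmul : ∀ a ∈ U, ∀ b ∈ U, a * b ∈ U) (hinv : ∀ a ∈ U, a⁻¹ ∈ U)
    {a b : ℂ} (ha : a ∈ VS U) (hb : b ∈ VS U) (hab : a ≠ b) :
    ∀ p ∈ AddSubgroup.closure (SetLike.coe (Submonoid.closure (GS U))),
      F12 a b p ∈ AddSubgroup.closure (SetLike.coe (Submonoid.closure (GS U))) := by
  have ha0 : a ≠ 0 := o_ne (VS_abs hsub ha)
  have hb0 : b ≠ 0 := o_ne (VS_abs hsub hb)
  have habne : a * b⁻¹ ≠ 1 := fun h => hab ((mul_inv_eq_one₀ hb0).1 h)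
  intro p hp
  refine AddSubgroup.closure_induction
    (p := fun g _ => F12 a b g ∈ AddSubgroup.closure (SetLike.coe (Submonoid.closure (GS U))))
    (fun m hm => ?_)
    (by show F12 a b 0 ∈ _; rw [F12_zero]; exact zero_mem _)
    (fun x y _ _ ih1 ih2 => by show F12 a b (x + y) ∈ _; rw [F12_add]; exact add_mem ih1 ih2)
    (fun x _ ih => by show F12 a b (-x) ∈ _; rw [F12_neg]; exact neg_mem ih) hp
  obtain ⟨w, hwV, hconj⟩ := conj_rel hsub hone hmul hinv m hm
  have h1 : a - b ≠ 0 := sub_ne_zero.2 hab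
  have h2 : (1 : ℂ) - a * b⁻¹ ≠ 0 := sub_ne_zero.2 (Ne.symm habne)
  have key : F12 a b m = m * ((1 - a * w) / (1 - a * b⁻¹)) := by
    unfold F12
    rw [hconj, mul_div_assoc', div_eq_div_iff h1 h2]
    field_simp
    ring
  rw [key]
  exact S_mul m (AddSubgroup.subset_closure hm) _
    (AddSubgroup.subset_closure (Submonoid.subset_closure
      ⟨a * w, VS_mul hmul ha hwV, a * b⁻¹, VS_mul hmul ha (VS_inv hinv hb), habne, rfl⟩))

lemma forward_incl (hsub : ∀ z ∈ U, ‖z‖ = 1) (hone : (1 : ℂ) ∈ U)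
    (hmul : ∀ a ∈ U, ∀ b ∈ U, a * b ∈ U) (hinv : ∀ a ∈ U, a⁻¹ ∈ U) :
    ∀ z, origamiPts U z →
      z ∈ AddSubgroup.closure (SetLike.coe (Submonoid.closure (GS U))) := by
  intro z hz
  induction hz with
  | zero => exact zero_mem _
  | one => exact AddSubgroup.subset_closure (one_mem (Submonoid.closure (GS U)))
  | @inter u v hu hv huv huv' p q hp hq ihp ihq =>
    have hsq := o_sq_ne huv huv'
    rw [Iop_eq (hsub _ hu) (hsub _ hv) hsq]
    exact add_mem (F_closed hsub hone hmul hinv ⟨_, hu, rfl⟩ ⟨_, hv, rfl⟩ hsq _ ihp)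
      (F_closed hsub hone hmul hinv ⟨_, hv, rfl⟩ ⟨_, hu, rfl⟩ hsq.symm _ ihq)

lemma neg_one_M (hsub : ∀ z ∈ U, ‖z‖ = 1)
    (hmul : ∀ a ∈ U, ∀ b ∈ U, a * b ∈ U) (hinv : ∀ a ∈ U, a⁻¹ ∈ U)
    (hcard : ∃ s : Finset ℂ, ↑s ⊆ U ∧ 6 ≤ s.card) :
    (-1 : ℂ) ∈ Submonoid.closure (GS U) := by
  obtain ⟨x, hxV, hx1, hx1'⟩ := exists_good hcard
  have hx0 : x ≠ 0 := o_ne (VS_abs hsub hxV)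
  have hyV := VS_mul hmul hxV hxV
  have hy1 : x * x ≠ 1 := by
    intro h
    rcases o_sq_cases (x := x) (y := 1) (by rw [one_pow, pow_two]; exact h) with h' | h'
    · exact hx1 h'
    · exact hx1' h'
  have hyi : (x * x)⁻¹ ∈ VS U := VS_inv hinv hyV
  have hyi1 : (x * x)⁻¹ ≠ 1 := fun h => hy1 (by rw [← inv_inv (x * x), h, inv_one])
  have g1 : -x ∈ GS U := GS_neg_mem hsub hinv hxV hx1
  have g3 : -(x * x)⁻¹ ∈ GS U := GS_neg_mem hsub hinv hyi hyi1
  have key : (-1 : ℂ) = (-x) * ((-x) * (-(x * x)⁻¹)) := by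
    linear_combination mul_inv_cancel₀ (mul_ne_zero hx0 hx0)
  rw [key]
  exact mul_mem (Submonoid.subset_closure g1)
    (mul_mem (Submonoid.subset_closure g1) (Submonoid.subset_closure g3))

lemma listprod_R (hsub : ∀ z ∈ U, ‖z‖ = 1) (hone : (1 : ℂ) ∈ U)
    (hmul : ∀ a ∈ U, ∀ b ∈ U, a * b ∈ U) (hinv : ∀ a ∈ U, a⁻¹ ∈ U) :
    ∀ l : List ℂ, (∀ x ∈ l, x ∈ GS U) → origamiPts U l.prod := by
  intro l
  induction l with
  | nil => intro _; rw [List.prod_nil]; exact .one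
  | cons g t ih =>
    intro hl
    have hg : g ∈ GS U := hl g List.mem_cons_self
    have htG : ∀ x ∈ t, x ∈ GS U := fun x hx => hl x (List.mem_cons_of_mem g hx)
    have htM : t.prod ∈ Submonoid.closure (GS U) :=
      Submonoid.list_prod_mem _ (fun x hx => Submonoid.subset_closure (htG x hx))
    have htR : origamiPts U t.prod := ih htG
    obtain ⟨w, hwV, hconj⟩ := conj_rel hsub hone hmul hinv t.prod htM
    obtain ⟨A, hAV, B, hBV, hB1, rfl⟩ := hg
    have hw0 : w ≠ 0 := o_ne (VS_abs hsub hwV)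
    have hA0 : A ≠ 0 := o_ne (VS_abs hsub hAV)
    have hB0 : B ≠ 0 := o_ne (VS_abs hsub hBV)
    have ha0 : A * w⁻¹ ≠ 0 := mul_ne_zero hA0 (inv_ne_zero hw0)
    obtain ⟨u, huU, hu2⟩ := VS_mul hmul hAV (VS_inv hinv hwV)
    obtain ⟨v, hvU, hv2⟩ := VS_mul hmul (VS_mul hmul hAV (VS_inv hinv hwV))
      (VS_inv hinv hBV)
    have hab : A * w⁻¹ - A * w⁻¹ * B⁻¹ ≠ 0 := by
      rw [sub_ne_zero]
      intro h
      apply hB1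
      have : (1 : ℂ) = B⁻¹ := mul_left_cancel₀ ha0 (by rw [mul_one]; exact h)
      rw [← inv_inv B, ← this, inv_one]
    have husq : u ^ 2 ≠ v ^ 2 := by
      simp only at hu2 hv2
      rw [hu2, hv2, ← sub_ne_zero]; exact hab
    have hne := o_ne_of_sq_ne husq
    have key : Iop u v t.prod 0 = (1 - A) / (1 - B) * t.prod := by
      rw [Iop_eq (hsub u huU) (hsub v hvU) husq, F12_zero, add_zero]
      unfold F12
      simp only at hu2 hv2
      have h2 : (1 : ℂ) - B ≠ 0 := sub_ne_zero.2 (Ne.symm hB1)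
      rw [hu2, hv2, hconj, div_mul_eq_mul_div, div_eq_div_iff hab h2]
      field_simp
      ring
    have final := origamiPts.inter huU hvU hne.1 hne.2 htR origamiPts.zero
    rw [key] at final
    rw [List.prod_cons]
    exact final

lemma R_add_s12 (hsub : ∀ z ∈ U, ‖z‖ = 1)
    (hcard : ∃ s : Finset ℂ, ↑s ⊆ U ∧ 6 ≤ s.card)
    {p q : ℂ} (hp : origamiPts U p) (hq : origamiPts U q) :
    origamiPts U (p + q) := by
  obtain ⟨u, huU, v, hvU, w, hwU, hab, hac, hbc⟩ := exists_three hcard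
  have hu := hsub u huU; have hv := hsub v hvU; have hw := hsub w hwU
  have nab := o_ne_of_sq_ne hab
  have nac := o_ne_of_sq_ne hac
  have nbc := o_ne_of_sq_ne hbc
  have nwv := o_ne_of_sq_ne hbc.symm
  have nwu := o_ne_of_sq_ne hac.symm
  have nvu := o_ne_of_sq_ne hab.symm
  have hX1 : origamiPts U (Iop u v p 0) := .inter huU hvU nab.1 nab.2 hp .zero
  have hX2 : origamiPts U (Iop u w q 0) := .inter huU hwU nac.1 nac.2 hq .zero
  have hY1 : origamiPts U (Iop v u p 0) := .inter hvU huU nvu.1 nvu.2 hp .zero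
  have hY2 : origamiPts U (Iop v w q 0) := .inter hvU hwU nbc.1 nbc.2 hq .zero
  have hX : origamiPts U (Iop w v (Iop u v p 0) (Iop u w q 0)) :=
    .inter hwU hvU nwv.1 nwv.2 hX1 hX2
  have hY : origamiPts U (Iop w u (Iop v u p 0) (Iop v w q 0)) :=
    .inter hwU huU nwu.1 nwu.2 hY1 hY2
  have final : origamiPts U (Iop u v (Iop w v (Iop u v p 0) (Iop u w q 0))
      (Iop w u (Iop v u p 0) (Iop v w q 0))) :=
    .inter huU hvU nab.1 nab.2 hX hY
  have key : Iop u v (Iop w v (Iop u v p 0) (Iop u w q 0))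
      (Iop w u (Iop v u p 0) (Iop v w q 0)) = p + q := by
    rw [Iop_eq hu hv hab p 0, Iop_eq hu hw hac q 0, Iop_eq hv hu hab.symm p 0,
      Iop_eq hv hw hbc q 0]
    rw [F12_zero, F12_zero, F12_zero, F12_zero, add_zero, add_zero, add_zero, add_zero]
    rw [Iop_eq hw hv hbc.symm, Iop_eq hw hu hac.symm, Iop_eq hu hv hab]
    exact F_add_identity (o_abs_sq hu) (o_abs_sq hv) (o_abs_sq hw) hab hac hbc p q
  rw [key] at final
  exact final

lemma backward_incl (hsub : ∀ z ∈ U, ‖z‖ = 1) (hone : (1 : ℂ) ∈ U)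
    (hmul : ∀ a ∈ U, ∀ b ∈ U, a * b ∈ U) (hinv : ∀ a ∈ U, a⁻¹ ∈ U)
    (hcard : ∃ s : Finset ℂ, ↑s ⊆ U ∧ 6 ≤ s.card) :
    ∀ z ∈ AddSubgroup.closure (SetLike.coe (Submonoid.closure (GS U))),
      origamiPts U z := by
  have hneg1 := neg_one_M hsub hmul hinv hcard
  have hMR : ∀ m ∈ Submonoid.closure (GS U), origamiPts U m := by
    intro m hm
    obtain ⟨l, hl, rfl⟩ := Submonoid.exists_list_of_mem_closure hm
    exact listprod_R hsub hone hmul hinv l hl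
  have hUnion : SetLike.coe (Submonoid.closure (GS U)) ∪
      -SetLike.coe (Submonoid.closure (GS U)) = SetLike.coe (Submonoid.closure (GS U)) := by
    apply Set.union_eq_self_of_subset_right
    intro x hx
    rw [Set.mem_neg] at hx
    have h2 : (-1 : ℂ) * (-x) ∈ Submonoid.closure (GS U) := mul_mem hneg1 hx
    simpa using h2
  intro z hz
  have hz' : z ∈ AddSubmonoid.closure (SetLike.coe (Submonoid.closure (GS U))) := by
    have h : z ∈ (AddSubgroup.closure
        (SetLike.coe (Submonoid.closure (GS U)))).toAddSubmonoid := hz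
    rw [AddSubgroup.closure_toAddSubmonoid, hUnion] at h
    exact h
  exact AddSubmonoid.closure_induction (motive := fun g _ => origamiPts U g)
    (fun m hm => hMR m hm) origamiPts.zero
    (fun x y _ _ hx hy => R_add_s12 hsub hcard hx hy) hz'

end OrigamiFinal

/-- `R(U)` equals the set of finite integer linear combinations of finite products of
numbers of the form `(1 − a)/(1 − b)` with `a, b ∈ V = {u² : u ∈ U}`, `b ≠ 1`. -/
theorem stmt_12 (U : Set ℂ)
    (hsub : ∀ z ∈ U, ‖z‖ = 1)
    (hone : (1 : ℂ) ∈ U)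
    (hmul : ∀ a ∈ U, ∀ b ∈ U, a * b ∈ U)
    (hinv : ∀ a ∈ U, a⁻¹ ∈ U)
    (hneg : (-1 : ℂ) ∈ U)
    (hcard : ∃ s : Finset ℂ, ↑s ⊆ U ∧ 6 ≤ s.card)
    : {z : ℂ | origamiPts U z} =
      (AddSubgroup.closure
        ((Submonoid.closure
          {z : ℂ | ∃ a ∈ (fun u : ℂ => u ^ 2) '' U, ∃ b ∈ (fun u : ℂ => u ^ 2) '' U,
            b ≠ 1 ∧ z = (1 - a) / (1 - b)} : Submonoid ℂ) : Set ℂ) : AddSubgroup ℂ) := by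
  ext z
  simp only [Set.mem_setOf_eq, SetLike.mem_coe]
  constructor
  · intro hz
    exact forward_incl hsub hone hmul hinv z hz
  · intro hz
    exact backward_incl hsub hone hmul hinv hcard z hz
end
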